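/- Variance of the kernel density estimator: under the same regularity conditions (f twice differentiable with bounded second derivative, K bounded with compact support, nh_n → ∞, h_n → 0), Var[ĝ_n(x)] = f(x)‖K‖_2² / (n h_n) + o(1/(n h_n)) at interior points x of supp(f), where ‖K‖_2² = ∫K². -/

import Mathlib

open MeasureTheory ProbabilityTheory Filter

/-- Change of variables `t = x - c u` for the Lebesgue integral. -/
lemma kde_cov (G : ℝ → ℝ) {c : ℝ} (hc : 0 < c) (x : ℝ) :
    ∫ t, G t = c * ∫ u, G (x - c * u) := by
  have h1 : (∫ u : ℝ, G (x - c * u)) = |c⁻¹| • ∫ t, G (x - t) :=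
    MeasureTheory.Measure.integral_comp_mul_left (fun t => G (x - t)) c
  have h2 : (∫ t : ℝ, G (x - t)) = ∫ t, G t :=
    integral_sub_left_eq_self G volume x
  rw [h1, h2, abs_of_pos (inv_pos.mpr hc), smul_eq_mul]
  field_simp

/-- Dominated convergence for kernel-type integrals. -/
lemma kde_dct {f q : ℝ → ℝ} (hfc : Continuous f) (hq : Measurable q)
    {D R : ℝ} (hD : ∀ u, |q u| ≤ D) (hR : 0 < R)
    (hsupp : ∀ u, u ∉ Set.Icc (-R) R → q u = 0)
    {h : ℕ → ℝ} (hto0 : Tendsto h atTop (nhds 0)) (x : ℝ) :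
    Tendsto (fun n => ∫ u, f (x - h n * u) * q u) atTop
      (nhds (f x * ∫ u, q u)) := by
  obtain ⟨M, hM⟩ := (isCompact_Icc (a := x - R) (b := x + R)).exists_bound_of_continuousOn
    hfc.continuousOn
  have hMD : ∀ u ∈ Set.Icc (-R) R, ∀ c ∈ Set.Icc (x - R) (x + R), |f c * q u| ≤ M * D := by
    intro u hu c hc
    rw [abs_mul]
    have h1 : |f c| ≤ M := hM c hc
    have h2 : |q u| ≤ D := hD u
    have := abs_nonneg (f c)
    have := abs_nonneg (q u)
    nlinarith
  set bound : ℝ → ℝ := Set.indicator (Set.Icc (-R) R) (fun _ => M * D) with hbound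
  have key : Tendsto (fun n => ∫ u, f (x - h n * u) * q u) atTop
      (nhds (∫ u, f x * q u)) := by
    apply tendsto_integral_filter_of_dominated_convergence bound
    · filter_upwards with n
      exact ((hfc.comp (by continuity)).measurable.mul hq).aestronglyMeasurable
    · have hev : ∀ᶠ n : ℕ in atTop, |h n| ≤ 1 := by
        have := hto0.abs
        simp only [abs_zero] at this
        exact this.eventually_le_const one_pos
      filter_upwards [hev] with n hn
      filter_upwards with u
      by_cases hu : u ∈ Set.Icc (-R) R
      · have hc : x - h n * u ∈ Set.Icc (x - R) (x + R) := by
          have h1 : |h n * u| ≤ R := by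
            rw [abs_mul]
            have h2 : |u| ≤ R := abs_le.mpr ⟨hu.1, hu.2⟩
            calc |h n| * |u| ≤ 1 * R := by
                  apply mul_le_mul hn h2 (abs_nonneg _) one_pos.le
              _ = R := one_mul R
          rw [abs_le] at h1
          rw [Set.mem_Icc]
          constructor <;> linarith [h1.1, h1.2]
        rw [hbound, Set.indicator_of_mem hu, Real.norm_eq_abs]
        exact hMD u hu _ hc
      · rw [hbound, Set.indicator_of_notMem hu, hsupp u hu, mul_zero, norm_zero]
    · exact (integrable_indicator_iff measurableSet_Icc).mpr
        (integrableOn_const measure_Icc_lt_top.ne)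
    · filter_upwards with u
      have h1 : Tendsto (fun n => x - h n * u) atTop (nhds x) := by
        have := (hto0.mul_const u)
        rw [zero_mul] at this
        have := tendsto_const_nhds (x := x) (f := atTop (α := ℕ)) |>.sub this
        simpa using this
      exact ((hfc.tendsto x).comp h1).mul_const (q u)
  rwa [MeasureTheory.integral_const_mul] at key


/-- Variance of the univariate kernel density estimator: under the standing regularity
conditions, with `h n → 0` and `n · h n → ∞`, at an interior point `x` of the support,
`Var[ĝ_n(x)] = f x · ‖K‖₂² / (n h n) + o(1/(n h n))`, i.e.
`(n h n) · Var[ĝ_n(x)] → f x · ∫ K²`. -/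
theorem kde_variance
    {Ω : Type*} [MeasurableSpace Ω] (μ : Measure Ω) [IsProbabilityMeasure μ]
    (X : ℕ → Ω → ℝ) (hX : ∀ i, Measurable (X i))
    (hindep : iIndepFun X μ)
    (f f' f'' : ℝ → ℝ) (hfnonneg : ∀ t, 0 ≤ f t)
    (hdist : ∀ i, Measure.map (X i) μ = volume.withDensity (fun t => ENNReal.ofReal (f t)))
    (hf' : ∀ t, HasDerivAt f (f' t) t) (hf'' : ∀ t, HasDerivAt f' (f'' t) t)
    (hf''cont : Continuous f'') (hf''bdd : ∃ B, ∀ t, |f'' t| ≤ B)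
    (K : ℝ → ℝ) (hKmeas : Measurable K) (hKbdd : ∃ C, ∀ u, |K u| ≤ C)
    (hKsupp : HasCompactSupport K)
    (hK0 : ∫ u, K u = 1) (hK1 : ∫ u, u * K u = 0)
    (h : ℕ → ℝ) (hpos : ∀ n, 0 < h n) (hto0 : Tendsto h atTop (nhds 0))
    (hnh : Tendsto (fun n : ℕ => n * h n) atTop atTop)
    (x : ℝ) (hx : x ∈ interior {t : ℝ | 0 < f t})
    (ghat : ℕ → Ω → ℝ)
    (hghat : ∀ n ω, ghat n ω =
      (∑ i ∈ Finset.range n, K ((x - X i ω) / h n)) / (n * h n)) :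
    Tendsto (fun n : ℕ =>
        (n * h n) * ∫ ω, (ghat n ω - ∫ ω', ghat n ω' ∂μ) ^ 2 ∂μ)
      atTop (nhds (f x * ∫ u, (K u) ^ 2)) := by
  -- continuity of f
  have hfc : Continuous f := by
    rw [continuous_iff_continuousAt]
    exact fun t => (hf' t).continuousAt
  obtain ⟨C, hC⟩ := hKbdd
  -- compact support bounds
  obtain ⟨r, hr⟩ := hKsupp.isBounded.subset_closedBall 0
  set R := max r 1 with hRdef
  have hRpos : (0:ℝ) < R := lt_of_lt_of_le one_pos (le_max_right _ _)
  have hKzero : ∀ u, u ∉ Set.Icc (-R) R → K u = 0 := by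
    intro u hu
    apply image_eq_zero_of_notMem_tsupport
    intro hmem
    apply hu
    have h1 := hr hmem
    rw [Metric.mem_closedBall, Real.dist_eq, sub_zero] at h1
    have h2 := abs_le.mp h1
    have h3 : r ≤ R := le_max_left _ _
    rw [Set.mem_Icc]
    constructor <;> linarith [h2.1, h2.2]
  -- measurability of the kernel functions
  have hgm : ∀ n, Measurable (fun t : ℝ => K ((x - t) / h n)) := by
    intro n
    exact hKmeas.comp ((measurable_const.sub measurable_id).div_const _)
  -- expectation via the distribution of X i
  have hint : ∀ (i : ℕ) (G : ℝ → ℝ), Measurable G →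
      ∫ ω, G (X i ω) ∂μ = ∫ t, f t * G t := by
    intro i G hG
    rw [← MeasureTheory.integral_map (hX i).aemeasurable hG.aestronglyMeasurable, hdist i]
    have hrw : (fun t => ENNReal.ofReal (f t)) = fun t => (((f t).toNNReal : NNReal) : ENNReal) :=
      rfl
    rw [hrw, integral_withDensity_eq_integral_smul (hfc.measurable.real_toNNReal) G]
    congr 1
    funext t
    rw [NNReal.smul_def, smul_eq_mul, Real.coe_toNNReal _ (hfnonneg t)]
  -- the per-observation kernel random variables are in L²
  have hY2 : ∀ (n i : ℕ), MemLp (fun ω => K ((x - X i ω) / h n)) 2 μ := by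
    intro n i
    refine (memLp_top_of_bound ((hgm n).comp (hX i)).aestronglyMeasurable C
      (ae_of_all _ fun ω => ?_)).mono_exponent le_top
    simpa [Real.norm_eq_abs] using hC ((x - X i ω) / h n)
  -- the mean and second moment of each kernel variable
  set A : ℕ → ℝ := fun n => ∫ t, f t * K ((x - t) / h n) with hAdef
  set B : ℕ → ℝ := fun n => ∫ t, f t * (K ((x - t) / h n)) ^ 2 with hBdef
  have hEY : ∀ n i, ∫ ω, K ((x - X i ω) / h n) ∂μ = A n := fun n i =>
    hint i (fun t => K ((x - t) / h n)) (hgm n)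
  have hEY2 : ∀ n i, ∫ ω, (K ((x - X i ω) / h n)) ^ 2 ∂μ = B n := fun n i =>
    hint i (fun t => (K ((x - t) / h n)) ^ 2) ((hgm n).pow_const 2)
  -- the variance of each kernel variable
  have hVarY : ∀ n i, variance (fun ω => K ((x - X i ω) / h n)) μ = B n - (A n) ^ 2 := by
    intro n i
    rw [variance_eq_sub (hY2 n i)]
    have h1 : μ[(fun ω => K ((x - X i ω) / h n)) ^ 2] = B n := by
      simpa [Pi.pow_apply] using hEY2 n i
    rw [h1, hEY n i]
  -- the variance of the sum
  set S : ℕ → Ω → ℝ := fun n ω => ∑ i ∈ Finset.range n, K ((x - X i ω) / h n) with hSdef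
  have hSsum : ∀ n, S n = ∑ i ∈ Finset.range n, (fun ω => K ((x - X i ω) / h n)) := by
    intro n; funext ω; simp [hSdef, Finset.sum_apply]
  have hVarS : ∀ n, variance (S n) μ = n * (B n - (A n) ^ 2) := by
    intro n
    rw [hSsum n, IndepFun.variance_sum (fun i _ => hY2 n i)
      (fun i _ j _ hij => ((hindep.indepFun hij).comp (hgm n) (hgm n)))]
    rw [Finset.sum_congr rfl (fun i _ => hVarY n i), Finset.sum_const, Finset.card_range,
      nsmul_eq_mul]
  -- the estimator in multiplicative form
  have hghat' : ∀ n, ghat n = fun ω => ((n : ℝ) * h n)⁻¹ * S n ω := by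
    intro n; funext ω; rw [hghat n ω, div_eq_inv_mul]
  have hmemS : ∀ n, MemLp (S n) 2 μ := by
    intro n; rw [hSsum n]; exact memLp_finset_sum' _ (fun i _ => hY2 n i)
  have hmemg : ∀ n, MemLp (ghat n) 2 μ := by
    intro n; rw [hghat' n]; exact (hmemS n).const_mul _
  -- identify the integral with the variance
  have hgoal : ∀ n, ∫ ω, (ghat n ω - ∫ ω', ghat n ω' ∂μ) ^ 2 ∂μ = variance (ghat n) μ := by
    intro n
    rw [variance_eq_integral (hmemg n).aemeasurable]
  -- the normalized variance, computed explicitly (for n ≥ 1)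
  have key : ∀ᶠ n : ℕ in atTop,
      ((n : ℝ) * h n) * ∫ ω, (ghat n ω - ∫ ω', ghat n ω' ∂μ) ^ 2 ∂μ
        = B n / h n - h n * (A n / h n) ^ 2 := by
    filter_upwards [eventually_ge_atTop 1] with n hn
    have hn0 : (0:ℝ) < (n : ℝ) := by exact_mod_cast Nat.lt_of_lt_of_le Nat.zero_lt_one hn
    have hh := hpos n
    rw [hgoal n, hghat' n, variance_const_mul, hVarS n]
    field_simp
  -- change of variables for the moments
  have hBlim : Tendsto (fun n => B n / h n) atTop (nhds (f x * ∫ u, (K u) ^ 2)) := by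
    have heq : ∀ n, B n / h n = ∫ u, f (x - h n * u) * (K u) ^ 2 := by
      intro n
      have hcov := kde_cov (fun t => f t * (K ((x - t) / h n)) ^ 2) (hpos n) x
      have hsimp : (fun u : ℝ => f (x - h n * u) * (K ((x - (x - h n * u)) / h n)) ^ 2)
          = fun u : ℝ => f (x - h n * u) * (K u) ^ 2 := by
        funext u
        rw [sub_sub_cancel, mul_div_cancel_left₀ _ (hpos n).ne']
      rw [hBdef]
      simp only
      rw [hcov, hsimp, mul_div_cancel_left₀ _ (hpos n).ne']
    simp only [heq]
    exact kde_dct hfc (hKmeas.pow_const 2)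
      (fun u => by simpa [abs_pow, sq_abs] using pow_le_pow_left₀ (abs_nonneg _) (hC u) 2)
      hRpos (fun u hu => by rw [hKzero u hu]; ring) hto0 x
  have hAlim : Tendsto (fun n => A n / h n) atTop (nhds (f x)) := by
    have heq : ∀ n, A n / h n = ∫ u, f (x - h n * u) * K u := by
      intro n
      have hcov := kde_cov (fun t => f t * K ((x - t) / h n)) (hpos n) x
      have hsimp : (fun u : ℝ => f (x - h n * u) * K ((x - (x - h n * u)) / h n))
          = fun u : ℝ => f (x - h n * u) * K u := by
        funext u
        rw [sub_sub_cancel, mul_div_cancel_left₀ _ (hpos n).ne']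
      rw [hAdef]
      simp only
      rw [hcov, hsimp, mul_div_cancel_left₀ _ (hpos n).ne']
    simp only [heq]
    have := kde_dct hfc hKmeas hC hRpos hKzero hto0 x
    rwa [hK0, mul_one] at this
  -- conclude
  have hfinal : Tendsto (fun n => B n / h n - h n * (A n / h n) ^ 2) atTop
      (nhds (f x * ∫ u, (K u) ^ 2)) := by
    have h2 : Tendsto (fun n => h n * (A n / h n) ^ 2) atTop (nhds (0 * (f x) ^ 2)) :=
      hto0.mul (hAlim.pow 2)
    rw [zero_mul] at h2
    simpa using hBlim.sub h2
  exact Tendsto.congr' (key.mono fun n hn => hn.symm) hfinal
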